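/- Let K be a finite-dimensional complex Hilbert space, K₀ ⊂ K a subspace with orthogonal projector Q₀, and T : H → K a map with Q₀Tf = θ(f)(f, Df)^{1/2} g for some g ∈ K₀, positive definite D, and unimodular θ. If h ⊥ K₀ and Q is the projector onto span{g, h}, then QT cannot be of linear or antilinear type; i.e., there is no linear or antilinear functional φ on H and unimodular θ' with Q_g QTf = θ'(f) φ(f) Q_g k for all f (Q_g the projector on [g]). -/

import Mathlib

open scoped ComplexConjugate

theorem stmt17 {H K : Type*}
    [NormedAddCommGroup H] [InnerProductSpace ℂ H] [FiniteDimensional ℂ H]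
    [NormedAddCommGroup K] [InnerProductSpace ℂ K] [FiniteDimensional ℂ K]
    (hH : 2 ≤ Module.finrank ℂ H)
    (K₀ : Submodule ℂ K) (g : K) (hgK₀ : g ∈ K₀) (hg : g ≠ 0)
    (h : K) (hh : ∀ x ∈ K₀, (inner ℂ h x : ℂ) = 0)
    (T : H → K)
    (θ : H → ℂ) (hθ : ∀ f, ‖θ f‖ = 1)
    (D : H →ₗ[ℂ] H)
    -- `D` positive definite:
    (hD : ∀ f : H, (inner ℂ f (D f) : ℂ).im = 0 ∧ (f ≠ 0 → 0 < (inner ℂ f (D f) : ℂ).re))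
    -- degenerate form of `Q₀T`:
    (hform : ∀ f : H,
      (K₀.subtypeL.comp (Submodule.orthogonalProjection K₀)) (T f) =
        θ f • ((Real.sqrt ((inner ℂ f (D f) : ℂ).re) : ℂ) • g)) :
    -- `QT` cannot be of linear or antilinear type, `Q` the projector onto `span{g, h}`,
    -- `Q_g` the projector onto `[g]`:
    ¬ ∃ φ : H → ℂ,
      (IsLinearMap ℂ φ ∨
        ((∀ x y : H, φ (x + y) = φ x + φ y) ∧
          ∀ (c : ℂ) (x : H), φ (c • x) = (starRingEnd ℂ) c * φ x)) ∧
      ∃ θ' : H → ℂ, (∀ f, ‖θ' f‖ = 1) ∧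
        ∃ k : K, ∀ f : H,
          ((Submodule.span ℂ {g}).subtypeL.comp
              (Submodule.orthogonalProjection (Submodule.span ℂ {g})))
            (((Submodule.span ℂ ({g, h} : Set K)).subtypeL.comp
                (Submodule.orthogonalProjection (Submodule.span ℂ ({g, h} : Set K)))) (T f)) =
          (θ' f * φ f) •
            ((Submodule.span ℂ {g}).subtypeL.comp
              (Submodule.orthogonalProjection (Submodule.span ℂ {g}))) k := by
  rintro ⟨φ, hφ, θ', hθ', k, hk⟩
  set U := Submodule.span ℂ ({g} : Set K) with hU
  set V := Submodule.span ℂ ({g, h} : Set K) with hV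
  have hgU : g ∈ U := Submodule.mem_span_singleton_self g
  have hU1 : U ≤ K₀ := Submodule.span_le.mpr (Set.singleton_subset_iff.mpr hgK₀)
  have hU2 : U ≤ V := Submodule.span_mono (by simp)
  -- the projection of `T f` on `span {g}`:
  have key : ∀ f : H, ((Submodule.orthogonalProjection U (T f) : K)) =
      θ f • ((Real.sqrt ((inner ℂ f (D f) : ℂ).re) : ℂ) • g) := by
    intro f
    have h1 : Submodule.orthogonalProjection U ((Submodule.orthogonalProjection K₀ (T f) : K)) =
        Submodule.orthogonalProjection U (T f) :=
      Submodule.orthogonalProjectionOnto_starProjection_of_le hU1 (T f)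
    have h2 : ((Submodule.orthogonalProjection K₀ (T f) : K)) =
        θ f • ((Real.sqrt ((inner ℂ f (D f) : ℂ).re) : ℂ) • g) := by
      simpa using hform f
    rw [← h1, h2]
    have h3 : ((Submodule.orthogonalProjection U g : K)) = g := Submodule.starProjection_eq_self_iff.mpr hgU
    push_cast [map_smul]
    rw [h3]
  -- φ is nonzero on nonzero vectors
  have hφne : ∀ f : H, f ≠ 0 → φ f ≠ 0 := by
    intro f hf
    have h4 := hk f
    have h5 : ((Submodule.orthogonalProjection U ((Submodule.orthogonalProjection V (T f) : K)) : K)) =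
        ((Submodule.orthogonalProjection U (T f) : K)) := by
      exact congrArg (fun x : U => (x : K)) (Submodule.orthogonalProjectionOnto_starProjection_of_le hU2 (T f))
    simp only [ContinuousLinearMap.comp_apply, Submodule.subtypeL_apply] at h4
    rw [h5, key f] at h4
    have hθf : θ f ≠ 0 := by
      intro h0; have := hθ f; rw [h0] at this; simp at this
    have hs : (Real.sqrt ((inner ℂ f (D f) : ℂ).re) : ℂ) ≠ 0 := by
      have := (hD f).2 hf
      simp [Real.sqrt_eq_zero', not_le, this]
    have hLHS : θ f • ((Real.sqrt ((inner ℂ f (D f) : ℂ).re) : ℂ) • g) ≠ 0 :=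
      smul_ne_zero hθf (smul_ne_zero hs hg)
    rw [h4] at hLHS
    intro h0
    exact hLHS (by rw [h0, mul_zero, zero_smul])
  -- build a nonzero vector in the kernel of φ, dim H ≥ 2
  have hb := Module.finBasis ℂ H
  set b := Module.finBasis ℂ H with hbdef
  have e₁ : H := b (Fin.castLE hH 0)
  set e₁ := b (Fin.castLE hH 0) with he1
  set e₂ := b (Fin.castLE hH 1) with he2
  have li : LinearIndependent ℂ ![e₁, e₂] := by
    have : LinearIndependent ℂ (b ∘ Fin.castLE hH) :=
      b.linearIndependent.comp _ (Fin.castLE_injective hH)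
    have heq : (b ∘ Fin.castLE hH) = ![e₁, e₂] := by
      funext i; fin_cases i <;> rfl
    rwa [heq] at this
  have he₁ : e₁ ≠ 0 := b.ne_zero _
  have he₂ : e₂ ≠ 0 := b.ne_zero _
  have hφ1 : φ e₁ ≠ 0 := hφne e₁ he₁
  -- unified (anti)linearity data
  obtain ⟨a, bb, hb0, hsum⟩ :
      ∃ a bb : ℂ, bb ≠ 0 ∧ φ (a • e₁ + bb • e₂) = 0 := by
    rcases hφ with hlin | ⟨hadd, hsmul⟩
    · refine ⟨φ e₂, -(φ e₁), neg_ne_zero.mpr hφ1, ?_⟩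
      rw [hlin.map_add, hlin.map_smul, hlin.map_smul]
      simp only [smul_eq_mul]
      ring
    · refine ⟨conj (φ e₂), -(conj (φ e₁)), ?_, ?_⟩
      · simpa using hφ1
      · rw [hadd, hsmul, hsmul]
        simp only [map_neg, RingHom.id_apply, Complex.conj_conj]
        ring
  have hzero : a • e₁ + bb • e₂ = 0 := by
    by_contra hne
    exact hφne _ hne hsum
  exact hb0 (li.eq_zero_of_pair hzero).2
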